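/- Let n ≥ 1 and let A be a ring of rank n, i.e., a (not necessarily commutative) unital ring whose underlying additive group is free of rank n as a ℤ-module. Then the discriminant of A satisfies disc(A) ≡ 0 or 1 (mod 4). -/

import Mathlib

open Matrix

namespace Stick

/-- reduction mod 2 from `ZMod 4` -/
abbrev ph : ZMod 4 →+* ZMod 2 := ZMod.castHom (by norm_num : (2:ℕ) ∣ 4) (ZMod 2)

lemma z1 : ∀ m : ZMod 4, ph m ≠ 0 → m * m = 1 := by decide
lemma z2 : ∀ a b : ZMod 4, ph a = 0 → ph b = 0 → a * b = 0 := by decide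
lemma z3 : ∀ m x : ZMod 4, m * m = 1 → ph (m * x) = ph m → x * x = 1 := by decide
lemma z4 : ∀ x y : ZMod 4, x * y = 1 → x * x = 1 := by decide
lemma z5 : ∀ m : ZMod 4, ph m ≠ 0 → m = 1 ∨ m = 3 := by decide
lemma z6 : ∀ a b u x y : ZMod 4, ph a = 0 → ph b = 0 → ph u ≠ 0 →
    ph (a*x + u*y) = ph a → ph (u*x + b*y) = ph b → ph x = 0 ∧ ph y = 0 := by decide
lemma z7 : ∀ a b u x y : ZMod 4, ph x = 0 → ph y = 0 →
    x*(a*x + u*y) + y*(u*x + b*y) = 0 := by decide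
lemma z8 : ∀ x : ZMod 4, ph x = 0 → ∃ y, x = 2 * y := by decide

/-- sum of a symmetric function over all pairs equals sum over the diagonal, in char 2 -/
lemma sym_sum {ι : Type} [Fintype ι] [DecidableEq ι] (f : ι → ι → ZMod 2)
    (hf : ∀ j k, f j k = f k j) : (∑ j, ∑ k, f j k) = ∑ j, f j j := by
  rw [← Finset.sum_product' (f := f)]
  rw [← Finset.diag_union_offDiag, Finset.sum_union (Finset.disjoint_diag_offDiag _)]
  have h2 : ∑ p ∈ Finset.univ.offDiag, f (p : ι × ι).1 p.2 = 0 := by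
    refine Finset.sum_involution (fun p _ => (p.2, p.1)) ?_ ?_ ?_ ?_
    · intro p _; rw [hf]; exact (show ∀ x : ZMod 2, x + x = 0 by decide) _
    · intro p hp _
      simp only [Finset.mem_offDiag] at hp
      intro h
      exact hp.2.2 (congrArg Prod.fst h).symm
    · intro p hp; simp only [Finset.mem_offDiag] at hp ⊢; exact ⟨hp.2.1, hp.1, hp.2.2.symm⟩
    · intro p _; rfl
  rw [h2, add_zero, Finset.sum_diag]

lemma vecMulVec_mul_right {ι : Type} [Fintype ι] (M : Matrix ι ι (ZMod 4)) (a c : ι → ZMod 4) :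
    M * vecMulVec a c = vecMulVec (M *ᵥ a) c := by
  ext i j
  simp only [mul_apply, vecMulVec_apply, mulVec, dotProduct, Finset.sum_mul]
  exact Finset.sum_congr rfl fun k _ => by ring

lemma vecMulVec_mul_left {ι : Type} [Fintype ι] (M : Matrix ι ι (ZMod 4)) (a c : ι → ZMod 4) :
    vecMulVec a c * M = vecMulVec a (c ᵥ* M) := by
  ext i j
  simp only [mul_apply, vecMulVec_apply, vecMul, dotProduct, Finset.mul_sum]
  exact Finset.sum_congr rfl fun k _ => by ring

lemma vecMulVec_mul_vecMulVec {ι : Type} [Fintype ι] (a b a' b' : ι → ZMod 4) :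
    vecMulVec a b * vecMulVec a' b' = (b ⬝ᵥ a') • vecMulVec a b' := by
  ext i j
  simp only [mul_apply, vecMulVec_apply, Matrix.smul_apply, dotProduct, smul_eq_mul,
    Finset.sum_mul]
  exact Finset.sum_congr rfl fun k _ => by ring

lemma vecMulVec_transpose' {ι : Type} (a c : ι → ZMod 4) :
    (vecMulVec a c)ᵀ = vecMulVec c a := by
  ext i j; simp [vecMulVec_apply, mul_comm]

lemma conj_expand {ι : Type} [Fintype ι] [DecidableEq ι] (M E : Matrix ι ι (ZMod 4)) :
    (1 + E)ᵀ * M * (1 + E) = M + M * E + Eᵀ * M + Eᵀ * M * E := by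
  rw [transpose_add, transpose_one, add_mul, one_mul, mul_add, mul_one, add_mul]
  abel

/-- determinant expansion when row 0 is concentrated in column 0 -/
lemma det_row0 {n : ℕ} {R : Type} [CommRing R] (M : Matrix (Fin (n+1)) (Fin (n+1)) R)
    (h : ∀ j, j ≠ 0 → M 0 j = 0) :
    M.det = M 0 0 * (M.submatrix Fin.succ Fin.succ).det := by
  rw [det_succ_row_zero, Finset.sum_eq_single 0]
  · simp [Fin.succAbove_zero]
  · intro j _ hj; rw [h j hj]; ring
  · simp

end Stick

namespace Stick

variable {n : ℕ}

/-- mulVec commutes with ring hom mapping -/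
lemma map_mulVec {ι : Type} [Fintype ι] {R S : Type} [CommRing R] [CommRing S]
    (f : R →+* S) (M : Matrix ι ι R) (v : ι → R) (i : ι) :
    ((M.map f) *ᵥ (fun j => f (v j))) i = f ((M *ᵥ v) i) := by
  simp only [mulVec, dotProduct, map_apply, map_sum, _root_.map_mul]

/-- transport all data along a reindexing equivalence -/
lemma reindex_facts (M : Matrix (Fin n) (Fin n) (ZMod 4)) (w : Fin n → ZMod 4)
    (e : Fin n ≃ Fin n) (hsym : M.IsSymm)
    (hc : ∀ i, ph ((M *ᵥ w) i) = ph (M i i)) :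
    (M.submatrix e e).IsSymm
    ∧ (∀ i, ph (((M.submatrix e e) *ᵥ (w ∘ e)) i) = ph ((M.submatrix e e) i i))
    ∧ (w ∘ e) ⬝ᵥ ((M.submatrix e e) *ᵥ (w ∘ e)) = w ⬝ᵥ (M *ᵥ w)
    ∧ (M.submatrix e e).det = M.det := by
  have hmv : (M.submatrix e e) *ᵥ (w ∘ e) = fun i => (M *ᵥ w) (e i) := by
    funext i
    simp only [mulVec, dotProduct, submatrix_apply, Function.comp_apply]
    exact Equiv.sum_comp e (fun j => M (e i) j * w j)
  refine ⟨?_, ?_, ?_, det_submatrix_equiv_self e M⟩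
  · ext i j; simp only [transpose_apply, submatrix_apply]; exact hsym.apply _ _
  · intro i; rw [hmv]; simpa using hc (e i)
  · rw [hmv]
    simp only [dotProduct, Function.comp_apply]
    exact Equiv.sum_comp e (fun j => w j * (M *ᵥ w) j)

/-- transport all data along a congruence `M ↦ Uᵀ M U` -/
lemma congr_facts (M U V : Matrix (Fin n) (Fin n) (ZMod 4)) (w : Fin n → ZMod 4)
    (hUV : U * V = 1) (hsym : M.IsSymm)
    (hc : ∀ i, ph ((M *ᵥ w) i) = ph (M i i)) :
    (Uᵀ * M * U).IsSymm
    ∧ (∀ i, ph (((Uᵀ * M * U) *ᵥ (V *ᵥ w)) i) = ph ((Uᵀ * M * U) i i))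
    ∧ (V *ᵥ w) ⬝ᵥ ((Uᵀ * M * U) *ᵥ (V *ᵥ w)) = w ⬝ᵥ (M *ᵥ w)
    ∧ (Uᵀ * M * U).det = M.det := by
  have hMw : (Uᵀ * M * U) *ᵥ (V *ᵥ w) = Uᵀ *ᵥ (M *ᵥ w) := by
    rw [mulVec_mulVec, mulVec_mulVec, mul_assoc (Uᵀ * M) U V, hUV, mul_one, ← mulVec_mulVec]
  refine ⟨?_, ?_, ?_, ?_⟩
  · show (Uᵀ * M * U)ᵀ = Uᵀ * M * U
    rw [transpose_mul, transpose_mul, transpose_transpose, hsym.eq, mul_assoc]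
  · intro i
    rw [hMw]
    have hL : ph ((Uᵀ *ᵥ (M *ᵥ w)) i) = ∑ j, ph (U j i) * ph (M j j) := by
      have h0 : (Uᵀ *ᵥ (M *ᵥ w)) i = ∑ j, U j i * (M *ᵥ w) j := rfl
      rw [h0, map_sum]
      exact Finset.sum_congr rfl fun j _ => by rw [_root_.map_mul, hc j]
    have hR : ph ((Uᵀ * M * U) i i) = ∑ j, ph (U j i) * ph (M j j) := by
      have h0 : (Uᵀ * M * U) i i = ∑ k, (∑ j, U j i * M j k) * U k i := by
        simp only [mul_apply, transpose_apply]
      have h1 : ∀ k, ph ((∑ j, U j i * M j k) * U k i)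
          = ∑ j, ph (U j i) * ph (M j k) * ph (U k i) := by
        intro k
        rw [_root_.map_mul, map_sum, Finset.sum_mul]
        exact Finset.sum_congr rfl fun j _ => by rw [_root_.map_mul]
      rw [h0, map_sum, Finset.sum_congr rfl fun k _ => h1 k, Finset.sum_comm]
      rw [sym_sum (fun j k => ph (U j i) * ph (M j k) * ph (U k i))
        (fun j k => by rw [(hsym.apply j k).symm]; ring)]
      exact Finset.sum_congr rfl fun j _ =>
        (show ∀ x y : ZMod 2, x * y * x = x * y by decide) _ _
    rw [hL, hR]
  · rw [hMw, dotProduct_mulVec, vecMul_transpose, mulVec_mulVec, hUV, one_mulVec]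
  · rw [det_mul, det_mul, det_transpose]
    have h1 : U.det * V.det = 1 := by rw [← det_mul, hUV, det_one]
    have h2 : U.det * U.det = 1 := z4 _ _ h1
    calc U.det * M.det * U.det = M.det * (U.det * U.det) := by ring
    _ = M.det := by rw [h2, mul_one]

/-- determinant expansion when rows 0 and 1 are concentrated in columns 0, 1 -/
lemma det_two_block (N : Matrix (Fin (n+2)) (Fin (n+2)) (ZMod 4))
    (h0 : ∀ j : Fin n, N 0 j.succ.succ = 0) (h1 : ∀ j : Fin n, N 1 j.succ.succ = 0) :
    N.det = (N 0 0 * N 1 1 - N 0 1 * N 1 0) *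
      (N.submatrix (Fin.succ ∘ Fin.succ) (Fin.succ ∘ Fin.succ)).det := by
  have hsa : ∀ k : Fin n, (1 : Fin (n+2)).succAbove k.succ = k.succ.succ := by
    intro k
    refine Fin.succAbove_of_le_castSucc _ _ ?_
    rw [Fin.le_def]
    simp [Fin.val_one]
  have hsa0 : (1 : Fin (n+2)).succAbove (0 : Fin (n+1)) = 0 := by
    refine Fin.succAbove_of_castSucc_lt _ _ ?_
    rw [Fin.lt_def]
    simp
  have hs1 : Fin.succ (0 : Fin (n+1)) = (1 : Fin (n+2)) := rfl
  rw [det_succ_row_zero]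
  rw [Fin.sum_univ_succ, Fin.sum_univ_succ]
  have hz : ∀ j : Fin n, ((-1 : ZMod 4)) ^ ((j.succ.succ : Fin (n+2)) : ℕ) * N 0 j.succ.succ *
      ((N.submatrix Fin.succ (j.succ.succ).succAbove).det) = 0 := by
    intro j; rw [h0 j]; ring
  rw [Finset.sum_congr rfl (fun j _ => hz j), Finset.sum_const_zero, add_zero]
  have e0 : ((0 : Fin (n+2)) : ℕ) = 0 := rfl
  have e1 : (((0 : Fin (n+1)).succ : Fin (n+2)) : ℕ) = 1 := rfl
  rw [e0, e1, pow_zero, pow_one]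
  have hA : (N.submatrix Fin.succ (Fin.succAbove 0)).det
      = N 1 1 * (N.submatrix (Fin.succ ∘ Fin.succ) (Fin.succ ∘ Fin.succ)).det := by
    rw [Fin.succAbove_zero]
    have hzr : ∀ j : Fin (n+1), j ≠ 0 → (N.submatrix Fin.succ Fin.succ) 0 j = 0 := by
      intro j hj
      obtain ⟨k, rfl⟩ := Fin.eq_succ_of_ne_zero hj
      simpa [submatrix_apply, hs1] using h1 k
    rw [det_row0 _ hzr, submatrix_submatrix]
    simp only [submatrix_apply, hs1]
  have hB : (N.submatrix Fin.succ (Fin.succAbove (0 : Fin (n+1)).succ)).det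
      = N 1 0 * (N.submatrix (Fin.succ ∘ Fin.succ) (Fin.succ ∘ Fin.succ)).det := by
    rw [hs1]
    have hzr : ∀ j : Fin (n+1), j ≠ 0 →
        (N.submatrix Fin.succ (Fin.succAbove (1 : Fin (n+2)))) 0 j = 0 := by
      intro j hj
      obtain ⟨k, rfl⟩ := Fin.eq_succ_of_ne_zero hj
      simp only [submatrix_apply, hs1, hsa k]
      exact h1 k
    rw [det_row0 _ hzr, submatrix_submatrix]
    have hcols : (Fin.succAbove (1 : Fin (n+2))) ∘ Fin.succ = Fin.succ ∘ Fin.succ := by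
      funext k; simp only [Function.comp_apply]; exact hsa k
    rw [hcols]
    simp only [submatrix_apply, hs1, hsa0]
  rw [hA, hB]
  simp only [submatrix_apply, hs1]
  ring

/-- clearing step with a 1×1 unit pivot at position (0,0) -/
lemma clear1 (M : Matrix (Fin (n+1)) (Fin (n+1)) (ZMod 4)) (w : Fin (n+1) → ZMod 4)
    (hsym : M.IsSymm) (hc : ∀ i, ph ((M *ᵥ w) i) = ph (M i i)) (hm : ph (M 0 0) ≠ 0) :
    ∃ (M' : Matrix (Fin n) (Fin n) (ZMod 4)) (w' : Fin n → ZMod 4),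
      M'.IsSymm ∧ (∀ i, ph ((M' *ᵥ w') i) = ph (M' i i)) ∧
      M.det = M 0 0 * M'.det ∧
      w ⬝ᵥ (M *ᵥ w) = M 0 0 + w' ⬝ᵥ (M' *ᵥ w') := by
  have hm1 : M 0 0 * M 0 0 = 1 := z1 _ hm
  set e0 : Fin (n+1) → ZMod 4 := Pi.single 0 1 with hE0
  set c : Fin (n+1) → ZMod 4 :=
    (fun j => if j = 0 then 0 else -(M 0 0 * M 0 j)) with hcdef
  have hc0 : c 0 = 0 := by rw [hcdef]; simp
  have hEE : vecMulVec e0 c * vecMulVec e0 c = 0 := by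
    rw [vecMulVec_mul_vecMulVec]
    have : c ⬝ᵥ e0 = 0 := by rw [hE0, dotProduct_single, hc0, zero_mul]
    rw [this, zero_smul]
  have hUV : (1 + vecMulVec e0 c) * (1 - vecMulVec e0 c) = 1 := by
    rw [mul_sub, mul_one, add_mul, one_mul, hEE, add_zero]
    abel
  obtain ⟨hsymN, hcN, hdotN, hdetN⟩ :=
    congr_facts M (1 + vecMulVec e0 c) (1 - vecMulVec e0 c) w hUV hsym hc
  set N := (1 + vecMulVec e0 c)ᵀ * M * (1 + vecMulVec e0 c) with hNdef
  set w1 := (1 - vecMulVec e0 c) *ᵥ w with hw1def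
  have hNmat : N = M + vecMulVec (M *ᵥ e0) c + vecMulVec c (e0 ᵥ* M)
      + ((e0 ᵥ* M) ⬝ᵥ e0) • vecMulVec c c := by
    rw [hNdef, conj_expand, vecMulVec_mul_right, vecMulVec_transpose', vecMulVec_mul_left,
      vecMulVec_mul_vecMulVec]
  have hN : ∀ i j, N i j = M i j + M i 0 * c j + c i * M 0 j + M 0 0 * (c i * c j) := by
    intro i j
    rw [hNmat]
    have h1 : (M *ᵥ e0) i = M i 0 := by rw [hE0, mulVec_single]; exact mul_one _
    have h2 : (e0 ᵥ* M) j = M 0 j := by rw [hE0, single_vecMul]; exact one_mul _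
    have h3 : (e0 ᵥ* M) ⬝ᵥ e0 = M 0 0 := by
      rw [hE0, dotProduct_single, single_vecMul]
      simp
    simp only [Matrix.add_apply, vecMulVec_apply, Matrix.smul_apply, smul_eq_mul, h1, h2, h3]
  have hrow0 : ∀ j, j ≠ 0 → N 0 j = 0 := by
    intro j hj
    rw [hN 0 j, hc0]
    have hcj : c j = -(M 0 0 * M 0 j) := by rw [hcdef]; simp [hj]
    rw [hcj]
    linear_combination (-(M 0 j)) * hm1
  have hcol0 : ∀ i, i ≠ 0 → N i 0 = 0 := by
    intro i hi
    rw [← hsymN.apply i 0]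
    exact hrow0 i hi
  have hN00 : N 0 0 = M 0 0 := by rw [hN 0 0, hc0]; ring
  -- the reduced data
  refine ⟨N.submatrix Fin.succ Fin.succ, w1 ∘ Fin.succ, ?_, ?_, ?_, ?_⟩
  case _ =>
    ext i j
    simp only [transpose_apply, submatrix_apply]
    exact hsymN.apply _ _
  case _ =>
    have hsucc : ∀ i, ((N.submatrix Fin.succ Fin.succ) *ᵥ (w1 ∘ Fin.succ)) i
        = (N *ᵥ w1) (Fin.succ i) := by
      intro i
      have hL : (N *ᵥ w1) (Fin.succ i) = ∑ j, N (Fin.succ i) j * w1 j := rfl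
      rw [hL, Fin.sum_univ_succ, hcol0 _ (Fin.succ_ne_zero i), zero_mul, zero_add]
      rfl
    intro i
    rw [hsucc i, hcN (Fin.succ i)]
    rfl
  case _ =>
    rw [← hdetN, det_row0 N hrow0, hN00]
  case _ =>
    have hv0 : (N *ᵥ w1) 0 = M 0 0 * w1 0 := by
      have hL : (N *ᵥ w1) 0 = ∑ j, N 0 j * w1 j := rfl
      rw [hL, Fin.sum_univ_succ, hN00]
      have : ∀ j : Fin n, N 0 (Fin.succ j) * w1 (Fin.succ j) = 0 := by
        intro j; rw [hrow0 _ (Fin.succ_ne_zero j), zero_mul]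
      rw [Finset.sum_congr rfl fun j _ => this j, Finset.sum_const_zero, add_zero]
    have hodd : w1 0 * w1 0 = 1 := by
      refine z3 (M 0 0) (w1 0) hm1 ?_
      have := hcN 0
      rwa [hv0, hN00] at this
    have hsucc : ∀ i, ((N.submatrix Fin.succ Fin.succ) *ᵥ (w1 ∘ Fin.succ)) i
        = (N *ᵥ w1) (Fin.succ i) := by
      intro i
      have hL : (N *ᵥ w1) (Fin.succ i) = ∑ j, N (Fin.succ i) j * w1 j := rfl
      rw [hL, Fin.sum_univ_succ, hcol0 _ (Fin.succ_ne_zero i), zero_mul, zero_add]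
      rfl
    have hdL : w1 ⬝ᵥ (N *ᵥ w1) = w1 0 * (M 0 0 * w1 0)
        + (w1 ∘ Fin.succ) ⬝ᵥ ((N.submatrix Fin.succ Fin.succ) *ᵥ (w1 ∘ Fin.succ)) := by
      have h0 : w1 ⬝ᵥ (N *ᵥ w1) = ∑ j, w1 j * (N *ᵥ w1) j := rfl
      rw [h0, Fin.sum_univ_succ, hv0]
      congr 1
      exact Finset.sum_congr rfl fun j _ => by rw [hsucc j]; rfl
    rw [← hdotN, hdL]
    have : w1 0 * (M 0 0 * w1 0) = M 0 0 := by linear_combination (M 0 0) * hodd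
    rw [this]
lemma vecMulVec_mulVec' {ι : Type} [Fintype ι] (a b v : ι → ZMod 4) :
    vecMulVec a b *ᵥ v = (b ⬝ᵥ v) • a := by
  funext i
  simp only [mulVec, dotProduct, vecMulVec_apply, Pi.smul_apply, smul_eq_mul]
  rw [Finset.sum_mul]
  exact Finset.sum_congr rfl fun k _ => by ring

lemma succ_succ_ne_zero (k : Fin n) : (k.succ.succ : Fin (n+2)) ≠ 0 := Fin.succ_ne_zero _

lemma succ_succ_ne_one (k : Fin n) : (k.succ.succ : Fin (n+2)) ≠ 1 := by
  intro h
  have h2 : (k.succ.succ : Fin (n+2)) = Fin.succ 0 := h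
  exact Fin.succ_ne_zero k (Fin.succ_injective _ h2)

/-- clearing step with a 2×2 pivot in positions 0,1 (even diagonal, unit off-diagonal) -/
lemma clear2 (M : Matrix (Fin (n+2)) (Fin (n+2)) (ZMod 4)) (w : Fin (n+2) → ZMod 4)
    (hsym : M.IsSymm) (hc : ∀ i, ph ((M *ᵥ w) i) = ph (M i i))
    (ha : ph (M 0 0) = 0) (hb : ph (M 1 1) = 0) (hu : ph (M 0 1) ≠ 0) :
    ∃ (M' : Matrix (Fin n) (Fin n) (ZMod 4)) (w' : Fin n → ZMod 4),
      M'.IsSymm ∧ (∀ i, ph ((M' *ᵥ w') i) = ph (M' i i)) ∧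
      M.det = 3 * M'.det ∧
      w ⬝ᵥ (M *ᵥ w) = w' ⬝ᵥ (M' *ᵥ w') := by
  have hu1 : M 0 1 * M 0 1 = 1 := z1 _ hu
  have hab : M 0 0 * M 1 1 = 0 := z2 _ _ ha hb
  have hM10 : M 1 0 = M 0 1 := hsym.apply 0 1
  set e0 : Fin (n+2) → ZMod 4 := Pi.single 0 1 with hE0
  set e1 : Fin (n+2) → ZMod 4 := Pi.single 1 1 with hE1
  set c : Fin (n+2) → ZMod 4 :=
    (fun j => if j = 0 ∨ j = 1 then 0 else M 1 1 * M 0 j - M 0 1 * M 1 j) with hcdef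
  set d : Fin (n+2) → ZMod 4 :=
    (fun j => if j = 0 ∨ j = 1 then 0 else -(M 0 1 * M 0 j) + M 0 0 * M 1 j) with hddef
  have hc0 : c 0 = 0 := by rw [hcdef]; simp
  have hc1 : c 1 = 0 := by rw [hcdef]; simp
  have hd0 : d 0 = 0 := by rw [hddef]; simp
  have hd1 : d 1 = 0 := by rw [hddef]; simp
  have hcs : ∀ k : Fin n, c k.succ.succ
      = M 1 1 * M 0 k.succ.succ - M 0 1 * M 1 k.succ.succ := by
    intro k; rw [hcdef]
    simp [succ_succ_ne_zero k, succ_succ_ne_one k]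
  have hds : ∀ k : Fin n, d k.succ.succ
      = -(M 0 1 * M 0 k.succ.succ) + M 0 0 * M 1 k.succ.succ := by
    intro k; rw [hddef]
    simp [succ_succ_ne_zero k, succ_succ_ne_one k]
  have hce0 : c ⬝ᵥ e0 = 0 := by rw [hE0, dotProduct_single, hc0, zero_mul]
  have hce1 : c ⬝ᵥ e1 = 0 := by rw [hE1, dotProduct_single, hc1, zero_mul]
  have hde0 : d ⬝ᵥ e0 = 0 := by rw [hE0, dotProduct_single, hd0, zero_mul]
  have hde1 : d ⬝ᵥ e1 = 0 := by rw [hE1, dotProduct_single, hd1, zero_mul]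
  have hEE : (vecMulVec e0 c + vecMulVec e1 d) * (vecMulVec e0 c + vecMulVec e1 d) = 0 := by
    rw [mul_add, add_mul, add_mul, vecMulVec_mul_vecMulVec, vecMulVec_mul_vecMulVec,
      vecMulVec_mul_vecMulVec, vecMulVec_mul_vecMulVec, hce0, hce1, hde0, hde1]
    simp
  have hUV : (1 + (vecMulVec e0 c + vecMulVec e1 d))
      * (1 - (vecMulVec e0 c + vecMulVec e1 d)) = 1 := by
    rw [mul_sub, mul_one, add_mul, one_mul, hEE, add_zero]
    abel
  obtain ⟨hsymN, hcN, hdotN, hdetN⟩ :=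
    congr_facts M (1 + (vecMulVec e0 c + vecMulVec e1 d))
      (1 - (vecMulVec e0 c + vecMulVec e1 d)) w hUV hsym hc
  set N := (1 + (vecMulVec e0 c + vecMulVec e1 d))ᵀ * M
      * (1 + (vecMulVec e0 c + vecMulVec e1 d)) with hNdef
  set w1 := (1 - (vecMulVec e0 c + vecMulVec e1 d)) *ᵥ w with hw1def
  have hMe0 : ∀ i, (M *ᵥ e0) i = M i 0 := by
    intro i; rw [hE0, mulVec_single]; exact mul_one _
  have hMe1 : ∀ i, (M *ᵥ e1) i = M i 1 := by
    intro i; rw [hE1, mulVec_single]; exact mul_one _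
  have he0M : ∀ j, (e0 ᵥ* M) j = M 0 j := by
    intro j; rw [hE0, single_vecMul]; exact one_mul _
  have he1M : ∀ j, (e1 ᵥ* M) j = M 1 j := by
    intro j; rw [hE1, single_vecMul]; exact one_mul _
  have h00 : (e0 ᵥ* M) ⬝ᵥ e0 = M 0 0 := by
    rw [hE0, dotProduct_single, single_vecMul]; simp
  have h01 : (e0 ᵥ* M) ⬝ᵥ e1 = M 0 1 := by
    rw [hE0, hE1, dotProduct_single, single_vecMul]; simp
  have h10 : (e1 ᵥ* M) ⬝ᵥ e0 = M 1 0 := by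
    rw [hE0, hE1, dotProduct_single, single_vecMul]; simp
  have h11 : (e1 ᵥ* M) ⬝ᵥ e1 = M 1 1 := by
    rw [hE1, dotProduct_single, single_vecMul]; simp
  have hN : ∀ i j, N i j = M i j + (M i 0 * c j + M i 1 * d j) + (c i * M 0 j + d i * M 1 j)
      + (M 0 0 * (c i * c j) + M 0 1 * (c i * d j) + M 1 0 * (d i * c j)
        + M 1 1 * (d i * d j)) := by
    intro i j
    rw [hNdef, conj_expand]
    simp only [mul_add, add_mul, transpose_add, vecMulVec_transpose', vecMulVec_mul_right,
      vecMulVec_mul_left, vecMulVec_mul_vecMulVec, vecMulVec_mulVec', h00, h01, h10, h11]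
    simp only [Matrix.add_apply, vecMulVec_apply, Matrix.smul_apply, Pi.smul_apply, smul_eq_mul,
      hMe0, hMe1, he0M, he1M]
    ring
  have hrow0 : ∀ k : Fin n, N 0 k.succ.succ = 0 := by
    intro k
    rw [hN 0 k.succ.succ, hc0, hd0, hcs k, hds k]
    linear_combination (M 0 k.succ.succ) * hab - (M 0 k.succ.succ) * hu1
  have hrow1 : ∀ k : Fin n, N 1 k.succ.succ = 0 := by
    intro k
    rw [hN 1 k.succ.succ, hc1, hd1, hcs k, hds k, hM10]
    linear_combination (M 1 k.succ.succ) * hab - (M 1 k.succ.succ) * hu1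
  have hcol0 : ∀ k : Fin n, N k.succ.succ 0 = 0 := by
    intro k; rw [← hsymN.apply _ 0]; exact hrow0 k
  have hcol1 : ∀ k : Fin n, N k.succ.succ 1 = 0 := by
    intro k; rw [← hsymN.apply _ 1]; exact hrow1 k
  have hN00 : N 0 0 = M 0 0 := by rw [hN 0 0, hc0, hd0]; ring
  have hN01 : N 0 1 = M 0 1 := by rw [hN 0 1, hc0, hd0, hc1, hd1]; ring
  have hN10 : N 1 0 = M 1 0 := by rw [hN 1 0, hc0, hd0, hc1, hd1]; ring
  have hN11 : N 1 1 = M 1 1 := by rw [hN 1 1, hc1, hd1]; ring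
  have hpiv : N 0 0 * N 1 1 - N 0 1 * N 1 0 = 3 := by
    rw [hN00, hN01, hN10, hN11, hM10]
    have h4 : (4 : ZMod 4) = 0 := by decide
    linear_combination hab - hu1 - h4
  have hone : Fin.succ (0 : Fin (n+1)) = (1 : Fin (n+2)) := rfl
  have hv0 : (N *ᵥ w1) 0 = M 0 0 * w1 0 + M 0 1 * w1 1 := by
    have hL : (N *ᵥ w1) 0 = ∑ j, N 0 j * w1 j := rfl
    rw [hL, Fin.sum_univ_succ, Fin.sum_univ_succ]
    have hz : ∀ k : Fin n, N 0 k.succ.succ * w1 k.succ.succ = 0 := by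
      intro k; rw [hrow0 k, zero_mul]
    rw [Finset.sum_congr rfl fun k _ => hz k, Finset.sum_const_zero, add_zero, hone,
      hN00, hN01]
  have hv1 : (N *ᵥ w1) 1 = M 0 1 * w1 0 + M 1 1 * w1 1 := by
    have hL : (N *ᵥ w1) 1 = ∑ j, N 1 j * w1 j := rfl
    rw [hL, Fin.sum_univ_succ, Fin.sum_univ_succ]
    have hz : ∀ k : Fin n, N 1 k.succ.succ * w1 k.succ.succ = 0 := by
      intro k; rw [hrow1 k, zero_mul]
    rw [Finset.sum_congr rfl fun k _ => hz k, Finset.sum_const_zero, add_zero, hone,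
      hN10, hN11, hM10]
  have hx : ph (w1 0) = 0 ∧ ph (w1 1) = 0 := by
    refine z6 (M 0 0) (M 1 1) (M 0 1) (w1 0) (w1 1) ha hb hu ?_ ?_
    · have := hcN 0; rwa [hv0, hN00] at this
    · have := hcN 1; rwa [hv1, hN11] at this
  have hsucc : ∀ i : Fin n,
      ((N.submatrix (Fin.succ ∘ Fin.succ) (Fin.succ ∘ Fin.succ)) *ᵥ (w1 ∘ (Fin.succ ∘ Fin.succ))) i
      = (N *ᵥ w1) i.succ.succ := by
    intro i
    have hL : (N *ᵥ w1) i.succ.succ = ∑ j, N i.succ.succ j * w1 j := rfl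
    rw [hL, Fin.sum_univ_succ, Fin.sum_univ_succ, hcol0 i, hone, hcol1 i, zero_mul, zero_mul,
      zero_add, zero_add]
    rfl
  refine ⟨N.submatrix (Fin.succ ∘ Fin.succ) (Fin.succ ∘ Fin.succ), w1 ∘ (Fin.succ ∘ Fin.succ),
    ?_, ?_, ?_, ?_⟩
  case _ =>
    ext i j
    simp only [transpose_apply, submatrix_apply]
    exact hsymN.apply _ _
  case _ =>
    intro i
    rw [hsucc i, hcN i.succ.succ]
    rfl
  case _ =>
    rw [← hdetN, det_two_block N hrow0 hrow1, hpiv]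
  case _ =>
    have hdL : w1 ⬝ᵥ (N *ᵥ w1)
        = (w1 0 * (M 0 0 * w1 0 + M 0 1 * w1 1) + w1 1 * (M 0 1 * w1 0 + M 1 1 * w1 1))
        + (w1 ∘ (Fin.succ ∘ Fin.succ)) ⬝ᵥ
          ((N.submatrix (Fin.succ ∘ Fin.succ) (Fin.succ ∘ Fin.succ)) *ᵥ
            (w1 ∘ (Fin.succ ∘ Fin.succ))) := by
      have hterm1 : w1 (Fin.succ (0 : Fin (n+1))) * (N *ᵥ w1) (Fin.succ 0)
          = w1 1 * (M 0 1 * w1 0 + M 1 1 * w1 1) := by rw [hone, hv1]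
      calc w1 ⬝ᵥ (N *ᵥ w1)
          = w1 0 * (N *ᵥ w1) 0 + (w1 (Fin.succ 0) * (N *ᵥ w1) (Fin.succ 0)
            + ∑ j : Fin n, w1 j.succ.succ * (N *ᵥ w1) j.succ.succ) := by
            rw [show w1 ⬝ᵥ (N *ᵥ w1) = ∑ j, w1 j * (N *ᵥ w1) j from rfl,
              Fin.sum_univ_succ, Fin.sum_univ_succ]
        _ = (w1 0 * (M 0 0 * w1 0 + M 0 1 * w1 1) + w1 1 * (M 0 1 * w1 0 + M 1 1 * w1 1))
            + ∑ j : Fin n, w1 j.succ.succ * (N *ᵥ w1) j.succ.succ := by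
            rw [hv0, hterm1, ← add_assoc]
        _ = (w1 0 * (M 0 0 * w1 0 + M 0 1 * w1 1) + w1 1 * (M 0 1 * w1 0 + M 1 1 * w1 1))
            + (w1 ∘ (Fin.succ ∘ Fin.succ)) ⬝ᵥ
              ((N.submatrix (Fin.succ ∘ Fin.succ) (Fin.succ ∘ Fin.succ)) *ᵥ
                (w1 ∘ (Fin.succ ∘ Fin.succ))) := by
            congr 1
            exact Finset.sum_congr rfl fun j _ => by rw [hsucc j]; rfl
    rw [← hdotN, hdL, z7 (M 0 0) (M 1 1) (M 0 1) (w1 0) (w1 1) hx.1 hx.2, zero_add]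
lemma combine1 (m d k c D K : ZMod 4) (hm : m = 1 ∨ m = 3) (hD : D = m * d) (hK : K = m + k)
    (h : d = 0 ∨ (d = 1 ∧ k = c) ∨ (d = 3 ∧ k = c + 2) ∨ (d = 2 ∧ (k = c + 1 ∨ k = c + 3))) :
    D = 0 ∨ (D = 1 ∧ K = c + 1) ∨ (D = 3 ∧ K = c + 1 + 2)
      ∨ (D = 2 ∧ (K = c + 1 + 1 ∨ K = c + 1 + 3)) := by
  revert hm hD hK h
  revert m d k c D K
  decide

lemma combine2 (d k c D K : ZMod 4) (hD : D = 3 * d) (hK : K = k)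
    (h : d = 0 ∨ (d = 1 ∧ k = c) ∨ (d = 3 ∧ k = c + 2) ∨ (d = 2 ∧ (k = c + 1 ∨ k = c + 3))) :
    D = 0 ∨ (D = 1 ∧ K = c + 2) ∨ (D = 3 ∧ K = c + 2 + 2)
      ∨ (D = 2 ∧ (K = c + 2 + 1 ∨ K = c + 2 + 3)) := by
  revert hD hK h
  revert d k c D K
  decide

lemma exists_equiv {m : ℕ} (i j : Fin (m+2)) (hij : i ≠ j) :
    ∃ e : Fin (m+2) ≃ Fin (m+2), e 0 = i ∧ e 1 = j := by
  classical
  set e1 := Equiv.swap (0 : Fin (m+2)) i with he1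
  set j' := e1.symm j with hj'
  have hj'0 : j' ≠ 0 := by
    intro h
    apply hij
    have : e1 j' = e1 0 := by rw [h]
    rw [hj', Equiv.apply_symm_apply, he1, Equiv.swap_apply_left] at this
    exact this.symm
  refine ⟨(Equiv.swap (1 : Fin (m+2)) j').trans e1, ?_, ?_⟩
  · show e1 (Equiv.swap 1 j' 0) = i
    have h01 : (0 : Fin (m+2)) ≠ 1 := by simp [Fin.ext_iff]
    rw [Equiv.swap_apply_of_ne_of_ne h01 (Ne.symm hj'0)]
    rw [he1, Equiv.swap_apply_left]
  · show e1 (Equiv.swap 1 j' 1) = j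
    rw [Equiv.swap_apply_left, hj', Equiv.apply_symm_apply]

lemma stick_key (n : ℕ) : ∀ (M : Matrix (Fin n) (Fin n) (ZMod 4)) (w : Fin n → ZMod 4),
    M.IsSymm → (∀ i, ph ((M *ᵥ w) i) = ph (M i i)) →
    M.det = 0 ∨ (M.det = 1 ∧ w ⬝ᵥ (M *ᵥ w) = (n : ZMod 4))
    ∨ (M.det = 3 ∧ w ⬝ᵥ (M *ᵥ w) = (n : ZMod 4) + 2)
    ∨ (M.det = 2 ∧ (w ⬝ᵥ (M *ᵥ w) = (n : ZMod 4) + 1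
        ∨ w ⬝ᵥ (M *ᵥ w) = (n : ZMod 4) + 3)) := by
  induction n using Nat.strong_induction_on with
  | _ n IH =>
  intro M w hsym hc
  by_cases hdiag : ∃ i, ph (M i i) ≠ 0
  · -- case A : unit on the diagonal
    obtain ⟨i0, hi0⟩ := hdiag
    obtain ⟨n', rfl⟩ : ∃ n', n = n' + 1 := ⟨n - 1, by have := i0.pos; omega⟩
    obtain ⟨hs1, hc1, hd1, hdet1⟩ := reindex_facts M w (Equiv.swap (0 : Fin (n'+1)) i0) hsym hc
    have hm : (M.submatrix (Equiv.swap (0 : Fin (n'+1)) i0) (Equiv.swap (0 : Fin (n'+1)) i0)) 0 0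
        = M i0 i0 := by
      simp [Equiv.swap_apply_left]
    have hpiv : ph ((M.submatrix (Equiv.swap (0 : Fin (n'+1)) i0)
        (Equiv.swap (0 : Fin (n'+1)) i0)) 0 0) ≠ 0 := by rw [hm]; exact hi0
    obtain ⟨M', w', hs', hc', hdet', hdot'⟩ := clear1 _ _ hs1 hc1 hpiv
    have hIH := IH n' (by omega) M' w' hs' hc'
    have hDm : M.det = M i0 i0 * M'.det := by rw [← hdet1, hdet', hm]
    have hKm : w ⬝ᵥ (M *ᵥ w) = M i0 i0 + w' ⬝ᵥ (M' *ᵥ w') := by rw [← hd1, hdot', hm]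
    have hcast : ((n' + 1 : ℕ) : ZMod 4) = (n' : ZMod 4) + 1 := by push_cast; ring
    rw [hcast]
    exact combine1 (M i0 i0) M'.det (w' ⬝ᵥ (M' *ᵥ w')) (n' : ZMod 4) _ _
      (z5 _ hi0) hDm hKm hIH
  · push_neg at hdiag
    by_cases hoff : ∃ i j, ph (M i j) ≠ 0
    · -- case B : even diagonal, unit off-diagonal entry
      obtain ⟨i0, j0, hij⟩ := hoff
      have hne : i0 ≠ j0 := by rintro rfl; exact hij (hdiag i0)
      obtain ⟨n', rfl⟩ : ∃ n', n = n' + 2 := by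
        cases n with
        | zero => exact i0.elim0
        | succ n1 => cases n1 with
          | zero => exact absurd (by omega : (i0 : ℕ) = (j0 : ℕ)) (fun h => hne (Fin.ext h))
          | succ n2 => exact ⟨n2, rfl⟩
      obtain ⟨e, he0, he1⟩ := exists_equiv i0 j0 hne
      obtain ⟨hs1, hc1, hd1, hdet1⟩ := reindex_facts M w e hsym hc
      have hpa : ph ((M.submatrix e e) 0 0) = 0 := by
        show ph (M (e 0) (e 0)) = 0; rw [he0]; exact hdiag i0
      have hpb : ph ((M.submatrix e e) 1 1) = 0 := by
        show ph (M (e 1) (e 1)) = 0; rw [he1]; exact hdiag j0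
      have hpu : ph ((M.submatrix e e) 0 1) ≠ 0 := by
        show ph (M (e 0) (e 1)) ≠ 0; rw [he0, he1]; exact hij
      obtain ⟨M', w', hs', hc', hdet', hdot'⟩ := clear2 _ _ hs1 hc1 hpa hpb hpu
      have hIH := IH n' (by omega) M' w' hs' hc'
      have hDm : M.det = 3 * M'.det := by rw [← hdet1, hdet']
      have hKm : w ⬝ᵥ (M *ᵥ w) = w' ⬝ᵥ (M' *ᵥ w') := by rw [← hd1, hdot']
      have hcast : ((n' + 2 : ℕ) : ZMod 4) = (n' : ZMod 4) + 2 := by push_cast; ring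
      rw [hcast]
      exact combine2 M'.det (w' ⬝ᵥ (M' *ᵥ w')) (n' : ZMod 4) _ _ hDm hKm hIH
    · -- case C : every entry is even
      push_neg at hoff
      cases n with
      | zero =>
        right; left
        refine ⟨det_fin_zero, ?_⟩
        show (0 : ZMod 4) = ((0:ℕ) : ZMod 4)
        simp
      | succ n1 => cases n1 with
        | zero =>
          have hdet : M.det = M 0 0 := det_fin_one M
          have hdot : w ⬝ᵥ (M *ᵥ w) = w 0 * (M 0 0 * w 0) := by
            show ∑ j : Fin 1, w j * (M *ᵥ w) j = _
            rw [Fin.sum_univ_one]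
            congr 1
            show ∑ j : Fin 1, M 0 j * w j = M 0 0 * w 0
            rw [Fin.sum_univ_one]
          rw [hdet, hdot, (by norm_num : ((1:ℕ) : ZMod 4) = 1)]
          exact (by decide : ∀ a x : ZMod 4, ph a = 0 →
            (a = 0 ∨ (a = 1 ∧ x*(a*x) = 1) ∨ (a = 3 ∧ x*(a*x) = 1 + 2)
              ∨ (a = 2 ∧ (x*(a*x) = 1 + 1 ∨ x*(a*x) = 1 + 3)))) (M 0 0) (w 0) (hoff 0 0)
        | succ n2 =>
          left
          choose g hg using fun i j => z8 (M i j) (hoff i j)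
          have hM2 : M = (2 : ZMod 4) • Matrix.of g := by
            ext i j
            rw [Matrix.smul_apply, of_apply, smul_eq_mul]
            exact hg i j
          rw [hM2, det_smul, Fintype.card_fin]
          have h20 : (2 : ZMod 4) ^ (n2 + 1 + 1) = 0 := by
            rw [pow_succ, pow_succ, mul_assoc]
            rw [(by decide : (2 : ZMod 4) * 2 = 0), mul_zero]
          rw [h20, zero_mul]
end Stick

/-- The Gram matrix of a ring of rank `n` with respect to a ℤ-basis `b`:
its `(i,j)` entry is the trace of the matrix of left multiplication by `b i * b j`. -/
noncomputable def gramMatrix {n : ℕ} {A : Type} [Ring A] (b : Module.Basis (Fin n) ℤ A) :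
    Matrix (Fin n) (Fin n) ℤ :=
  Matrix.of fun i j => (Algebra.leftMulMatrix b (b i * b j)).trace

/-- The discriminant of a ring of rank `n` with respect to a ℤ-basis `b`. -/
noncomputable def disc {n : ℕ} {A : Type} [Ring A] (b : Module.Basis (Fin n) ℤ A) : ℤ :=
  (gramMatrix b).det

namespace Stick

variable {n : ℕ} {A : Type} [Ring A] (b : Module.Basis (Fin n) ℤ A)

/-- the trace linear functional -/
noncomputable def L : A →ₗ[ℤ] ℤ :=
  (Matrix.traceLinearMap (Fin n) ℤ ℤ) ∘ₗ (Algebra.leftMulMatrix b).toLinearMap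

lemma L_apply (x : A) : L b x = ((Algebra.leftMulMatrix b) x).trace := rfl

lemma gram_apply (i j : Fin n) : gramMatrix b i j = L b (b i * b j) := rfl

lemma gram_symm : (gramMatrix b).IsSymm := by
  ext i j
  show gramMatrix b j i = gramMatrix b i j
  show ((Algebra.leftMulMatrix b) (b j * b i)).trace = ((Algebra.leftMulMatrix b) (b i * b j)).trace
  rw [_root_.map_mul, _root_.map_mul, Matrix.trace_mul_comm]

lemma gram_row (i : Fin n) :
    ((gramMatrix b) *ᵥ (fun j => b.repr 1 j)) i = L b (b i) := by
  have h1 : ((gramMatrix b) *ᵥ (fun j => b.repr 1 j)) i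
      = ∑ j, (b.repr 1 j) • L b (b i * b j) := by
    show ∑ j, gramMatrix b i j * b.repr 1 j = _
    exact Finset.sum_congr rfl fun j _ => by rw [gram_apply, smul_eq_mul]; ring
  rw [h1]
  have h2 : ∀ j, (b.repr 1 j) • L b (b i * b j) = L b (b i * ((b.repr 1 j) • b j)) := by
    intro j; rw [mul_smul_comm, _root_.map_smul]
  rw [Finset.sum_congr rfl fun j _ => h2 j, ← map_sum, ← Finset.mul_sum, Module.Basis.sum_repr, mul_one]

lemma gram_dot :
    (fun j => b.repr 1 j) ⬝ᵥ ((gramMatrix b) *ᵥ (fun j => b.repr 1 j)) = (n : ℤ) := by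
  have h1 : (fun j => b.repr 1 j) ⬝ᵥ ((gramMatrix b) *ᵥ (fun j => b.repr 1 j))
      = ∑ j, (b.repr 1 j) • L b (b j) := by
    show ∑ j, (b.repr 1 j) * ((gramMatrix b) *ᵥ (fun j => b.repr 1 j)) j = _
    exact Finset.sum_congr rfl fun j _ => by rw [gram_row, smul_eq_mul]
  rw [h1]
  have h2 : ∀ j, (b.repr 1 j) • L b (b j) = L b ((b.repr 1 j) • b j) := by
    intro j; rw [_root_.map_smul]
  rw [Finset.sum_congr rfl fun j _ => h2 j, ← map_sum, Module.Basis.sum_repr]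
  rw [L_apply, _root_.map_one, Matrix.trace_one, Fintype.card_fin]

/-- trace of a square is the trace, mod 2 -/
lemma trace_sq_mod2 (Y : Matrix (Fin n) (Fin n) ℤ) :
    (((Y * Y).trace : ℤ) : ZMod 2) = ((Y.trace : ℤ) : ZMod 2) := by
  have htm : ∀ (Z : Matrix (Fin n) (Fin n) ℤ),
      ((Z.trace : ℤ) : ZMod 2) = (Z.map (Int.cast : ℤ → ZMod 2)).trace := by
    intro Z
    simp only [Matrix.trace, Matrix.diag, Matrix.map_apply]
    push_cast
    rfl
  rw [htm, htm]
  have hmm : (Y * Y).map (Int.cast : ℤ → ZMod 2)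
      = (Y.map (Int.cast : ℤ → ZMod 2)) * (Y.map (Int.cast : ℤ → ZMod 2)) := by
    have := Matrix.map_mul (L := Y) (M := Y) (f := Int.castRingHom (ZMod 2))
    exact this
  rw [hmm]
  set X := Y.map (Int.cast : ℤ → ZMod 2) with hX
  have h1 : (X * X).trace = ∑ k, ∑ l, X k l * X l k := by
    simp [Matrix.trace, Matrix.diag, Matrix.mul_apply]
  rw [h1, sym_sum (fun k l => X k l * X l k) (fun k l => mul_comm _ _)]
  show ∑ k, X k k * X k k = X.trace
  have : ∀ k, X k k * X k k = X k k := fun k =>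
    (show ∀ x : ZMod 2, x * x = x by decide) _
  rw [Finset.sum_congr rfl fun k _ => this k]
  rfl

lemma gram_diag_mod2 (i : Fin n) :
    ((gramMatrix b i i : ℤ) : ZMod 2) = ((L b (b i) : ℤ) : ZMod 2) := by
  have h1 : gramMatrix b i i = ((Algebra.leftMulMatrix b (b i)) * (Algebra.leftMulMatrix b (b i))).trace := by
    show ((Algebra.leftMulMatrix b) (b i * b i)).trace = _
    rw [_root_.map_mul]
  rw [h1, trace_sq_mod2]
  rfl

end Stick

open Stick

/-- Stickelberger's discriminant theorem for rings of rank `n`: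
the discriminant is congruent to `0` or `1` modulo `4`. -/
theorem disc_mod_four_eq_zero_or_one (n : ℕ) (hn : 1 ≤ n) (A : Type) [Ring A]
    (b : Module.Basis (Fin n) ℤ A) :
    disc b % 4 = 0 ∨ disc b % 4 = 1 := by
  classical
  set G := gramMatrix b with hG
  set wZ : Fin n → ℤ := fun j => b.repr 1 j with hwZ
  set M4 := G.map (Int.cast : ℤ → ZMod 4) with hM4
  set w4 : Fin n → ZMod 4 := fun i => ((wZ i : ℤ) : ZMod 4) with hw4
  have hs4 : M4.IsSymm := by
    ext i j
    show M4 j i = M4 i j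
    exact congrArg (Int.cast : ℤ → ZMod 4) ((gram_symm b).apply i j)
  have hmv4 : ∀ i, (M4 *ᵥ w4) i = (((G *ᵥ wZ) i : ℤ) : ZMod 4) := by
    intro i
    exact map_mulVec (Int.castRingHom (ZMod 4)) G wZ i
  have hc4 : ∀ i, ph ((M4 *ᵥ w4) i) = ph (M4 i i) := by
    intro i
    rw [hmv4 i]
    rw [map_intCast ph ((G *ᵥ wZ) i)]
    have hR : ph (M4 i i) = ((G i i : ℤ) : ZMod 2) := map_intCast ph (G i i)
    rw [hR]
    rw [hG] at *
    rw [gram_row b i]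
    exact (gram_diag_mod2 b i).symm
  have hdot4 : w4 ⬝ᵥ (M4 *ᵥ w4) = (n : ZMod 4) := by
    have h1 : w4 ⬝ᵥ (M4 *ᵥ w4) = ((wZ ⬝ᵥ (G *ᵥ wZ) : ℤ) : ZMod 4) := by
      show ∑ i, w4 i * (M4 *ᵥ w4) i = _
      rw [show (wZ ⬝ᵥ (G *ᵥ wZ) : ℤ) = ∑ i, wZ i * (G *ᵥ wZ) i from rfl]
      push_cast
      exact Finset.sum_congr rfl fun i _ => by rw [hmv4 i]; try rfl
    rw [h1, hG, gram_dot b]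
    push_cast
    try rfl
  have hdet4 : M4.det = ((disc b : ℤ) : ZMod 4) := by
    exact (RingHom.map_det (Int.castRingHom (ZMod 4)) G).symm
  rcases stick_key n M4 w4 hs4 hc4 with h | ⟨h1, _⟩ | ⟨_, h2⟩ | ⟨_, h2⟩
  · left
    rw [hdet4] at h
    have : ((4:ℕ) : ℤ) ∣ disc b := (ZMod.intCast_zmod_eq_zero_iff_dvd (disc b) 4).mp h
    omega
  · right
    rw [hdet4] at h1
    have : ((disc b : ℤ) : ZMod 4) = ((1 : ℤ) : ZMod 4) := by rw [h1]; norm_num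
    have h3 : disc b % 4 = 1 % 4 := (ZMod.intCast_eq_intCast_iff _ _ _).mp this
    omega
  · exfalso
    rw [hdot4] at h2
    have : (2 : ZMod 4) = 0 := by rwa [left_eq_add] at h2
    exact absurd this (by decide)
  · exfalso
    rcases h2 with h2 | h2
    · rw [hdot4] at h2
      have : (1 : ZMod 4) = 0 := by rwa [left_eq_add] at h2
      exact absurd this (by decide)
    · rw [hdot4] at h2
      have : (3 : ZMod 4) = 0 := by rwa [left_eq_add] at h2
      exact absurd this (by decide)
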